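/- Given two joint policies π_old, π_new in a γ-discounted MDP with Σ_i |A_i^{π_old}(s,a)| ≤ ε for all (s,a), and defining L_{π_old}(π_new) = η(π_old) + E_{s∼d^{π_old}, a∼π_new(·|s)}[Σ_i A_i^{π_old}(s,a)], the approximation error satisfies |η(π_new) − L_{π_old}(π_new)| ≤ (4εγ α²)/(1−γ)², where α = max_s D_TV(π_old(·|s), π_new(·|s)). -/

import Mathlib

open scoped BigOperators

/-- Distribution over states at time `t` of the Markov chain induced by joint policy `π`,
transition kernel `P`, and initial state distribution `d0`. -/
noncomputable def stateDist {S A : Type*} [Fintype S] [Fintype A]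
    (P : S → A → S → ℝ) (π : S → A → ℝ) (d0 : S → ℝ) : ℕ → S → ℝ
  | 0 => d0
  | t + 1 => fun s' => ∑ s, ∑ a, stateDist P π d0 t s * π s a * P s a s'

/-- Expected reward received at time `t` along trajectories of the induced chain. -/
noncomputable def expRew {S A : Type*} [Fintype S] [Fintype A]
    (P : S → A → S → ℝ) (π : S → A → ℝ) (r : S → A → ℝ) (d0 : S → ℝ) (t : ℕ) : ℝ :=
  ∑ s, stateDist P π d0 t s * ∑ a, π s a * r s a

/-- State-value function: expected discounted return starting from state `s`. -/
noncomputable def Vval {S A : Type*} [Fintype S] [Fintype A] [DecidableEq S]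
    (γ : ℝ) (P : S → A → S → ℝ) (π : S → A → ℝ) (r : S → A → ℝ) (s : S) : ℝ :=
  ∑' t : ℕ, γ ^ t * expRew P π r (fun s' => if s' = s then 1 else 0) t

/-- Action-value function: expected discounted return with `s₀ = s`, `a₀ = a` fixed,
and subsequent actions chosen by `π`. -/
noncomputable def Qval {S A : Type*} [Fintype S] [Fintype A]
    (γ : ℝ) (P : S → A → S → ℝ) (π : S → A → ℝ) (r : S → A → ℝ) (s : S) (a : A) : ℝ :=
  r s a + γ * ∑' t : ℕ, γ ^ t * expRew P π r (P s a) t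

/-- Individual advantage function. -/
noncomputable def Aval {S A : Type*} [Fintype S] [Fintype A] [DecidableEq S]
    (γ : ℝ) (P : S → A → S → ℝ) (π : S → A → ℝ) (r : S → A → ℝ) (s : S) (a : A) : ℝ :=
  Qval γ P π r s a - Vval γ P π r s

/-- Collective return: sum over agents of the expected individual discounted return. -/
noncomputable def eta {S A ι : Type*} [Fintype S] [Fintype A] [Fintype ι] [DecidableEq S]
    (γ : ℝ) (P : S → A → S → ℝ) (π : S → A → ℝ) (r : ι → S → A → ℝ) (d0 : S → ℝ) : ℝ :=
  ∑ i, ∑ s, d0 s * Vval γ P π (r i) s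

/-- Discounted state visitation measure. -/
noncomputable def dvisit {S A : Type*} [Fintype S] [Fintype A]
    (γ : ℝ) (P : S → A → S → ℝ) (π : S → A → ℝ) (d0 : S → ℝ) (s : S) : ℝ :=
  ∑' t : ℕ, γ ^ t * stateDist P π d0 t s

section Aux
variable {S A : Type*} [Fintype S] [Fintype A]
variable (γ : ℝ) (P : S → A → S → ℝ) (π : S → A → ℝ) (r : S → A → ℝ) (d0 : S → ℝ)

lemma stateDist_nonneg (hP0 : ∀ s a s', 0 ≤ P s a s') (hπ0 : ∀ s a, 0 ≤ π s a)
    (hd0 : ∀ s, 0 ≤ d0 s) : ∀ t s, 0 ≤ stateDist P π d0 t s := by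
  intro t
  induction t with
  | zero => exact hd0
  | succ t ih =>
    intro s'
    simp only [stateDist]
    apply Finset.sum_nonneg; intro s _
    apply Finset.sum_nonneg; intro a _
    exact mul_nonneg (mul_nonneg (ih s) (hπ0 s a)) (hP0 s a s')

lemma stateDist_sum_one (hP1 : ∀ s a, ∑ s', P s a s' = 1) (hπ1 : ∀ s, ∑ a, π s a = 1)
    (hd1 : ∑ s, d0 s = 1) : ∀ t, ∑ s, stateDist P π d0 t s = 1 := by
  intro t
  induction t with
  | zero => exact hd1
  | succ t ih =>
    simp only [stateDist]
    rw [Finset.sum_comm]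
    calc ∑ s, ∑ s', ∑ a, stateDist P π d0 t s * π s a * P s a s'
        = ∑ s, stateDist P π d0 t s := by
          apply Finset.sum_congr rfl; intro s _
          rw [Finset.sum_comm]
          calc ∑ a, ∑ s', stateDist P π d0 t s * π s a * P s a s'
              = ∑ a, stateDist P π d0 t s * π s a := by
                apply Finset.sum_congr rfl; intro a _
                rw [← Finset.mul_sum, hP1, mul_one]
            _ = stateDist P π d0 t s := by rw [← Finset.mul_sum, hπ1, mul_one]
      _ = 1 := ih

lemma stateDist_linear {ι' : Type*} [Fintype ι'] (w : ι' → ℝ) (D : ι' → S → ℝ) :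
    ∀ t s, stateDist P π (fun s => ∑ j, w j * D j s) t s
      = ∑ j, w j * stateDist P π (D j) t s := by
  intro t
  induction t with
  | zero => intro s; rfl
  | succ t ih =>
    intro s'
    simp only [stateDist, ih, Finset.sum_mul, Finset.mul_sum]
    conv_rhs => rw [Finset.sum_comm]
    refine Finset.sum_congr rfl fun s _ => ?_
    conv_rhs => rw [Finset.sum_comm]
    refine Finset.sum_congr rfl fun a _ => ?_
    exact Finset.sum_congr rfl fun j _ => by ring

lemma stateDist_succ_eq :
    ∀ t s', stateDist P π d0 (t + 1) s'
      = stateDist P π (fun s' => ∑ s, ∑ a, d0 s * π s a * P s a s') t s' := by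
  intro t
  induction t with
  | zero => intro s'; rfl
  | succ t ih =>
    intro s'
    show ∑ s, ∑ a, stateDist P π d0 (t+1) s * π s a * P s a s' = _
    simp only [ih]
    rfl

lemma expRew_linear {ι' : Type*} [Fintype ι'] (w : ι' → ℝ) (D : ι' → S → ℝ) (t : ℕ) :
    expRew P π r (fun s => ∑ j, w j * D j s) t = ∑ j, w j * expRew P π r (D j) t := by
  have h := stateDist_linear P π w D
  simp only [expRew]
  simp only [h]
  simp only [Finset.sum_mul, Finset.mul_sum]
  conv_rhs => rw [Finset.sum_comm]
  refine Finset.sum_congr rfl fun s _ => ?_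
  conv_rhs => rw [Finset.sum_comm]
  exact Finset.sum_congr rfl fun a _ => Finset.sum_congr rfl fun j _ => by ring

lemma abs_expRew_le (hP0 : ∀ s a s', 0 ≤ P s a s') (hP1 : ∀ s a, ∑ s', P s a s' = 1)
    (hπ0 : ∀ s a, 0 ≤ π s a) (hπ1 : ∀ s, ∑ a, π s a = 1)
    (hd0 : ∀ s, 0 ≤ d0 s) (hd1 : ∑ s, d0 s = 1)
    (R : ℝ) (hR : ∀ s a, |r s a| ≤ R) (t : ℕ) :
    |expRew P π r d0 t| ≤ R := by
  have key : ∀ s, |∑ a, π s a * r s a| ≤ R := by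
    intro s
    calc |∑ a, π s a * r s a| ≤ ∑ a, |π s a * r s a| := Finset.abs_sum_le_sum_abs _ _
      _ ≤ ∑ a, π s a * R := by
          refine Finset.sum_le_sum fun a _ => ?_
          rw [abs_mul, abs_of_nonneg (hπ0 s a)]
          exact mul_le_mul_of_nonneg_left (hR s a) (hπ0 s a)
      _ = R := by rw [← Finset.sum_mul, hπ1, one_mul]
  calc |expRew P π r d0 t| ≤ ∑ s, |stateDist P π d0 t s * ∑ a, π s a * r s a| :=
        Finset.abs_sum_le_sum_abs _ _
    _ ≤ ∑ s, stateDist P π d0 t s * R := by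
        refine Finset.sum_le_sum fun s _ => ?_
        rw [abs_mul, abs_of_nonneg (stateDist_nonneg P π d0 hP0 hπ0 hd0 t s)]
        exact mul_le_mul_of_nonneg_left (key s) (stateDist_nonneg P π d0 hP0 hπ0 hd0 t s)
    _ = R := by rw [← Finset.sum_mul, stateDist_sum_one P π d0 hP1 hπ1 hd1, one_mul]
end Aux
section Aux2
variable {S A : Type*} [Fintype S] [Fintype A] [DecidableEq S]
variable (γ : ℝ) (P : S → A → S → ℝ) (π : S → A → ℝ) (r : S → A → ℝ) (d0 : S → ℝ)

lemma summable_of_abs_bound {C : ℝ} (hγ0 : 0 ≤ γ) (hγ1 : γ < 1) (f : ℕ → ℝ)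
    (hf : ∀ t, |f t| ≤ C * γ ^ t) : Summable f :=
  Summable.of_norm_bounded ((summable_geometric_of_lt_one hγ0 hγ1).mul_left C) hf

lemma summable_expRew (hγ0 : 0 ≤ γ) (hγ1 : γ < 1)
    (hP0 : ∀ s a s', 0 ≤ P s a s') (hP1 : ∀ s a, ∑ s', P s a s' = 1)
    (hπ0 : ∀ s a, 0 ≤ π s a) (hπ1 : ∀ s, ∑ a, π s a = 1)
    (R : ℝ) (hR : ∀ s a, |r s a| ≤ R)
    (hd0 : ∀ s, 0 ≤ d0 s) (hd1 : ∑ s, d0 s = 1) :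
    Summable (fun t => γ ^ t * expRew P π r d0 t) := by
  refine summable_of_abs_bound γ (C := R) hγ0 hγ1 _ fun t => ?_
  rw [abs_mul, abs_pow, abs_of_nonneg hγ0, mul_comm]
  exact mul_le_mul_of_nonneg_right
    (abs_expRew_le P π r d0 hP0 hP1 hπ0 hπ1 hd0 hd1 R hR t) (pow_nonneg hγ0 t)

lemma abs_tsum_expRew_le (hγ0 : 0 ≤ γ) (hγ1 : γ < 1)
    (hP0 : ∀ s a s', 0 ≤ P s a s') (hP1 : ∀ s a, ∑ s', P s a s' = 1)
    (hπ0 : ∀ s a, 0 ≤ π s a) (hπ1 : ∀ s, ∑ a, π s a = 1)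
    (R : ℝ) (hR : ∀ s a, |r s a| ≤ R)
    (hd0 : ∀ s, 0 ≤ d0 s) (hd1 : ∑ s, d0 s = 1) :
    |∑' t : ℕ, γ ^ t * expRew P π r d0 t| ≤ R / (1 - γ) := by
  have hsum := summable_expRew γ P π r d0 hγ0 hγ1 hP0 hP1 hπ0 hπ1 R hR hd0 hd1
  have hg : Summable (fun t : ℕ => R * γ ^ t) :=
    (summable_geometric_of_lt_one hγ0 hγ1).mul_left R
  have habs : |∑' t : ℕ, γ ^ t * expRew P π r d0 t| ≤ ∑' t : ℕ, |γ ^ t * expRew P π r d0 t| := by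
    simpa only [Real.norm_eq_abs] using
      norm_tsum_le_tsum_norm (f := fun t => γ ^ t * expRew P π r d0 t)
        (by simpa only [Real.norm_eq_abs] using hsum.abs)
  calc |∑' t : ℕ, γ ^ t * expRew P π r d0 t| ≤ ∑' t : ℕ, |γ ^ t * expRew P π r d0 t| := habs
    _ ≤ ∑' t : ℕ, R * γ ^ t := by
        refine Summable.tsum_le_tsum (fun t => ?_) hsum.abs hg
        rw [abs_mul, abs_pow, abs_of_nonneg hγ0, mul_comm]
        exact mul_le_mul_of_nonneg_right
          (abs_expRew_le P π r d0 hP0 hP1 hπ0 hπ1 hd0 hd1 R hR t) (pow_nonneg hγ0 t)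
    _ = R / (1 - γ) := by rw [tsum_mul_left, tsum_geometric_of_lt_one hγ0 hγ1, div_eq_mul_inv]

omit [Fintype S] in
lemma delta_nonneg (s0 : S) : ∀ s, 0 ≤ (if s = s0 then (1:ℝ) else 0) := by
  intro s; split <;> norm_num

lemma delta_sum (s0 : S) : ∑ s, (if s = s0 then (1:ℝ) else 0) = 1 := by simp

lemma Vval_d0 (hγ0 : 0 ≤ γ) (hγ1 : γ < 1)
    (hP0 : ∀ s a s', 0 ≤ P s a s') (hP1 : ∀ s a, ∑ s', P s a s' = 1)
    (hπ0 : ∀ s a, 0 ≤ π s a) (hπ1 : ∀ s, ∑ a, π s a = 1)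
    (R : ℝ) (hR : ∀ s a, |r s a| ≤ R)
    (hd0 : ∀ s, 0 ≤ d0 s) (hd1 : ∑ s, d0 s = 1) :
    ∑ s, d0 s * Vval γ P π r s = ∑' t : ℕ, γ ^ t * expRew P π r d0 t := by
  have hdec : ∀ t, γ ^ t * expRew P π r d0 t
      = ∑ s0, d0 s0 * (γ ^ t * expRew P π r (fun s' => if s' = s0 then 1 else 0) t) := by
    intro t
    have h1 : d0 = fun s => ∑ s0, d0 s0 * (if s = s0 then (1:ℝ) else 0) := by
      funext s; simp
    conv_lhs => rw [h1]
    rw [expRew_linear P π r d0 (fun s0 => fun s' => if s' = s0 then (1:ℝ) else 0) t]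
    rw [Finset.mul_sum]
    exact Finset.sum_congr rfl fun s0 _ => by ring
  symm
  calc ∑' t : ℕ, γ ^ t * expRew P π r d0 t
      = ∑' t : ℕ, ∑ s0, d0 s0 * (γ ^ t * expRew P π r (fun s' => if s' = s0 then 1 else 0) t) :=
        tsum_congr hdec
    _ = ∑ s0, ∑' t : ℕ, d0 s0 * (γ ^ t * expRew P π r (fun s' => if s' = s0 then 1 else 0) t) := by
        refine Summable.tsum_finsetSum fun s0 _ => Summable.mul_left _ ?_
        exact summable_expRew γ P π r _ hγ0 hγ1 hP0 hP1 hπ0 hπ1 R hR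
          (delta_nonneg s0) (delta_sum s0)
    _ = ∑ s0, d0 s0 * Vval γ P π r s0 :=
        Finset.sum_congr rfl fun s0 _ => by rw [tsum_mul_left]; rfl

lemma Qval_bellman (hγ0 : 0 ≤ γ) (hγ1 : γ < 1)
    (hP0 : ∀ s a s', 0 ≤ P s a s') (hP1 : ∀ s a, ∑ s', P s a s' = 1)
    (hπ0 : ∀ s a, 0 ≤ π s a) (hπ1 : ∀ s, ∑ a, π s a = 1)
    (R : ℝ) (hR : ∀ s a, |r s a| ≤ R) (s : S) (a : A) :
    Qval γ P π r s a = r s a + γ * ∑ s', P s a s' * Vval γ P π r s' := by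
  rw [Qval, Vval_d0 γ P π r (P s a) hγ0 hγ1 hP0 hP1 hπ0 hπ1 R hR (hP0 s a) (hP1 s a)]
end Aux2
section Aux3
variable {S A : Type*} [Fintype S] [Fintype A] [DecidableEq S]
variable (γ : ℝ) (P : S → A → S → ℝ) (π : S → A → ℝ) (r : S → A → ℝ)

lemma abs_Vval_le (hγ0 : 0 ≤ γ) (hγ1 : γ < 1)
    (hP0 : ∀ s a s', 0 ≤ P s a s') (hP1 : ∀ s a, ∑ s', P s a s' = 1)
    (hπ0 : ∀ s a, 0 ≤ π s a) (hπ1 : ∀ s, ∑ a, π s a = 1)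
    (R : ℝ) (hR : ∀ s a, |r s a| ≤ R) (s : S) :
    |Vval γ P π r s| ≤ R / (1 - γ) :=
  abs_tsum_expRew_le γ P π r _ hγ0 hγ1 hP0 hP1 hπ0 hπ1 R hR (delta_nonneg s) (delta_sum s)

lemma abs_Qval_le (hγ0 : 0 ≤ γ) (hγ1 : γ < 1)
    (hP0 : ∀ s a s', 0 ≤ P s a s') (hP1 : ∀ s a, ∑ s', P s a s' = 1)
    (hπ0 : ∀ s a, 0 ≤ π s a) (hπ1 : ∀ s, ∑ a, π s a = 1)
    (R : ℝ) (hR : ∀ s a, |r s a| ≤ R) (s : S) (a : A) :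
    |Qval γ P π r s a| ≤ R / (1 - γ) := by
  have hR0 : 0 ≤ R := le_trans (abs_nonneg _) (hR s a)
  have h1 : |∑' t : ℕ, γ ^ t * expRew P π r (P s a) t| ≤ R / (1 - γ) :=
    abs_tsum_expRew_le γ P π r _ hγ0 hγ1 hP0 hP1 hπ0 hπ1 R hR (hP0 s a) (hP1 s a)
  have hpos : 0 < 1 - γ := by linarith
  calc |Qval γ P π r s a| ≤ |r s a| + |γ * ∑' t : ℕ, γ ^ t * expRew P π r (P s a) t| :=
        abs_add_le _ _
    _ ≤ R + γ * (R / (1 - γ)) := by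
        refine add_le_add (hR s a) ?_
        rw [abs_mul, abs_of_nonneg hγ0]
        exact mul_le_mul_of_nonneg_left h1 hγ0
    _ = R / (1 - γ) := by field_simp; ring

lemma abs_Aval_le (hγ0 : 0 ≤ γ) (hγ1 : γ < 1)
    (hP0 : ∀ s a s', 0 ≤ P s a s') (hP1 : ∀ s a, ∑ s', P s a s' = 1)
    (hπ0 : ∀ s a, 0 ≤ π s a) (hπ1 : ∀ s, ∑ a, π s a = 1)
    (R : ℝ) (hR : ∀ s a, |r s a| ≤ R) (s : S) (a : A) :
    |Aval γ P π r s a| ≤ 2 * R / (1 - γ) := by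
  calc |Aval γ P π r s a| ≤ |Qval γ P π r s a| + |Vval γ P π r s| := abs_sub _ _
    _ ≤ R / (1 - γ) + R / (1 - γ) :=
        add_le_add (abs_Qval_le γ P π r hγ0 hγ1 hP0 hP1 hπ0 hπ1 R hR s a)
          (abs_Vval_le γ P π r hγ0 hγ1 hP0 hP1 hπ0 hπ1 R hR s)
    _ = 2 * R / (1 - γ) := by ring
end Aux3
section Aux4
variable {S A : Type*} [Fintype S] [Fintype A] [DecidableEq S]
variable (γ : ℝ) (P : S → A → S → ℝ) (π : S → A → ℝ) (r : S → A → ℝ)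

lemma Vval_eq_sum_Q (hγ0 : 0 ≤ γ) (hγ1 : γ < 1)
    (hP0 : ∀ s a s', 0 ≤ P s a s') (hP1 : ∀ s a, ∑ s', P s a s' = 1)
    (hπ0 : ∀ s a, 0 ≤ π s a) (hπ1 : ∀ s, ∑ a, π s a = 1)
    (R : ℝ) (hR : ∀ s a, |r s a| ≤ R) (s : S) :
    Vval γ P π r s = ∑ a, π s a * Qval γ P π r s a := by
  have hsum : Summable (fun t => γ ^ t * expRew P π r (fun s' => if s' = s then 1 else 0) t) :=
    summable_expRew γ P π r _ hγ0 hγ1 hP0 hP1 hπ0 hπ1 R hR (delta_nonneg s) (delta_sum s)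
  have h0 : expRew P π r (fun s' => if s' = s then 1 else 0) 0 = ∑ a, π s a * r s a := by
    simp [expRew, stateDist]
  have hsucc : ∀ t, expRew P π r (fun s' => if s' = s then 1 else 0) (t + 1)
      = ∑ a, π s a * expRew P π r (P s a) t := by
    intro t
    have h1 : ∀ s'', stateDist P π (fun s' => if s' = s then 1 else 0) (t + 1) s''
        = stateDist P π (fun s' => ∑ a, π s a * P s a s') t s'' := by
      intro s''
      rw [stateDist_succ_eq]
      congr 1
      funext s'
      simp
    calc expRew P π r (fun s' => if s' = s then 1 else 0) (t + 1)
        = expRew P π r (fun s' => ∑ a, π s a * P s a s') t := by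
          simp only [expRew]
          exact Finset.sum_congr rfl fun s'' _ => by rw [h1]
      _ = ∑ a, π s a * expRew P π r (P s a) t := expRew_linear P π r _ _ t
  rw [Vval, Summable.tsum_eq_zero_add hsum]
  have hterm : ∀ t : ℕ, γ ^ (t + 1) * expRew P π r (fun s' => if s' = s then 1 else 0) (t + 1)
      = ∑ a, (π s a * γ) * (γ ^ t * expRew P π r (P s a) t) := by
    intro t
    rw [hsucc t, Finset.mul_sum]
    exact Finset.sum_congr rfl fun a _ => by ring
  calc γ ^ 0 * expRew P π r (fun s' => if s' = s then 1 else 0) 0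
        + ∑' t : ℕ, γ ^ (t + 1) * expRew P π r (fun s' => if s' = s then 1 else 0) (t + 1)
      = (∑ a, π s a * r s a)
        + ∑' t : ℕ, ∑ a, (π s a * γ) * (γ ^ t * expRew P π r (P s a) t) := by
        rw [pow_zero, one_mul, h0, tsum_congr hterm]
    _ = (∑ a, π s a * r s a)
        + ∑ a, ∑' t : ℕ, (π s a * γ) * (γ ^ t * expRew P π r (P s a) t) := by
        congr 1
        refine Summable.tsum_finsetSum fun a _ => Summable.mul_left _ ?_
        exact summable_expRew γ P π r _ hγ0 hγ1 hP0 hP1 hπ0 hπ1 R hR (hP0 s a) (hP1 s a)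
    _ = (∑ a, π s a * r s a)
        + ∑ a, (π s a * γ) * ∑' t : ℕ, γ ^ t * expRew P π r (P s a) t := by
        congr 1
        exact Finset.sum_congr rfl fun a _ => tsum_mul_left
    _ = ∑ a, π s a * Qval γ P π r s a := by
        rw [← Finset.sum_add_distrib]
        refine Finset.sum_congr rfl fun a _ => ?_
        rw [Qval]
        ring
end Aux4
section Aux5
variable {S A : Type*} [Fintype S] [Fintype A] [DecidableEq S]
variable (γ : ℝ) (P : S → A → S → ℝ) (μ ν : S → A → ℝ) (r : S → A → ℝ) (d0 : S → ℝ)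

lemma sum_pi_Aval_zero (hγ0 : 0 ≤ γ) (hγ1 : γ < 1)
    (hP0 : ∀ s a s', 0 ≤ P s a s') (hP1 : ∀ s a, ∑ s', P s a s' = 1)
    (hμ0 : ∀ s a, 0 ≤ μ s a) (hμ1 : ∀ s, ∑ a, μ s a = 1)
    (R : ℝ) (hR : ∀ s a, |r s a| ≤ R) (s : S) :
    ∑ a, μ s a * Aval γ P μ r s a = 0 := by
  simp only [Aval, mul_sub]
  rw [Finset.sum_sub_distrib, ← Finset.sum_mul, hμ1, one_mul,
    ← Vval_eq_sum_Q γ P μ r hγ0 hγ1 hP0 hP1 hμ0 hμ1 R hR s, sub_self]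

lemma step_identity (hγ0 : 0 ≤ γ) (hγ1 : γ < 1)
    (hP0 : ∀ s a s', 0 ≤ P s a s') (hP1 : ∀ s a, ∑ s', P s a s' = 1)
    (hμ0 : ∀ s a, 0 ≤ μ s a) (hμ1 : ∀ s, ∑ a, μ s a = 1)
    (hν1 : ∀ s, ∑ a, ν s a = 1)
    (R : ℝ) (hR : ∀ s a, |r s a| ≤ R) (t : ℕ) :
    ∑ s, stateDist P ν d0 t s * ∑ a, ν s a * Aval γ P μ r s a
      = expRew P ν r d0 t
        + γ * (∑ s', stateDist P ν d0 (t + 1) s' * Vval γ P μ r s')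
        - ∑ s, stateDist P ν d0 t s * Vval γ P μ r s := by
  set D := stateDist P ν d0 t with hD
  set V := Vval γ P μ r with hV
  have hQ : ∀ s a, Qval γ P μ r s a = r s a + γ * ∑ s', P s a s' * V s' :=
    fun s a => Qval_bellman γ P μ r hγ0 hγ1 hP0 hP1 hμ0 hμ1 R hR s a
  have hs : ∀ s, ∑ a, ν s a * Aval γ P μ r s a
      = (∑ a, ν s a * r s a) + γ * (∑ a, ∑ s', ν s a * P s a s' * V s') - V s := by
    intro s
    have e1 : ∀ a, ν s a * Aval γ P μ r s a
        = ν s a * r s a + γ * (∑ s', ν s a * P s a s' * V s') - ν s a * V s := by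
      intro a
      rw [Aval, hQ]
      have h2 : ∑ s', ν s a * P s a s' * V s' = ν s a * ∑ s', P s a s' * V s' := by
        rw [Finset.mul_sum]
        exact Finset.sum_congr rfl fun s' _ => by ring
      rw [h2, ← hV]
      ring
    rw [Finset.sum_congr rfl fun a _ => e1 a, Finset.sum_sub_distrib, Finset.sum_add_distrib,
      ← Finset.mul_sum, ← Finset.sum_mul, hν1, one_mul]
  have e2 : ∀ s, D s * ((∑ a, ν s a * r s a) + γ * (∑ a, ∑ s', ν s a * P s a s' * V s') - V s)
      = D s * (∑ a, ν s a * r s a)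
        + γ * (∑ a, ∑ s', D s * (ν s a * P s a s' * V s')) - D s * V s := by
    intro s
    have h3 : ∑ a, ∑ s', D s * (ν s a * P s a s' * V s')
        = D s * ∑ a, ∑ s', ν s a * P s a s' * V s' := by
      rw [Finset.mul_sum]
      exact Finset.sum_congr rfl fun a _ => by rw [Finset.mul_sum]
    rw [h3]; ring
  have e3 : ∑ s', stateDist P ν d0 (t + 1) s' * V s'
      = ∑ s, ∑ a, ∑ s', D s * (ν s a * P s a s' * V s') := by
    show ∑ s', (∑ s, ∑ a, D s * ν s a * P s a s') * V s' = _
    simp only [Finset.sum_mul]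
    rw [Finset.sum_comm]
    refine Finset.sum_congr rfl fun s _ => ?_
    rw [Finset.sum_comm]
    exact Finset.sum_congr rfl fun a _ => Finset.sum_congr rfl fun s' _ => by ring
  calc ∑ s, D s * ∑ a, ν s a * Aval γ P μ r s a
      = ∑ s, (D s * (∑ a, ν s a * r s a)
          + γ * (∑ a, ∑ s', D s * (ν s a * P s a s' * V s')) - D s * V s) := by
        refine Finset.sum_congr rfl fun s _ => ?_
        rw [hs s, e2 s]
    _ = (∑ s, D s * ∑ a, ν s a * r s a)
        + γ * (∑ s, ∑ a, ∑ s', D s * (ν s a * P s a s' * V s')) - ∑ s, D s * V s := by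
        rw [Finset.sum_sub_distrib, Finset.sum_add_distrib, ← Finset.mul_sum]
    _ = expRew P ν r d0 t + γ * (∑ s', stateDist P ν d0 (t + 1) s' * V s')
        - ∑ s, D s * V s := by rw [e3]; rfl
end Aux5
section Aux6
variable {S A : Type*} [Fintype S] [Fintype A] [DecidableEq S]
variable (γ : ℝ) (P : S → A → S → ℝ) (μ ν : S → A → ℝ) (r : S → A → ℝ) (d0 : S → ℝ)

lemma perf_diff (hγ0 : 0 ≤ γ) (hγ1 : γ < 1)
    (hP0 : ∀ s a s', 0 ≤ P s a s') (hP1 : ∀ s a, ∑ s', P s a s' = 1)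
    (hμ0 : ∀ s a, 0 ≤ μ s a) (hμ1 : ∀ s, ∑ a, μ s a = 1)
    (hν0 : ∀ s a, 0 ≤ ν s a) (hν1 : ∀ s, ∑ a, ν s a = 1)
    (R : ℝ) (hR : ∀ s a, |r s a| ≤ R)
    (hd0 : ∀ s, 0 ≤ d0 s) (hd1 : ∑ s, d0 s = 1) :
    (∑ s, d0 s * Vval γ P ν r s) - ∑ s, d0 s * Vval γ P μ r s
      = ∑' t : ℕ, γ ^ t * ∑ s, stateDist P ν d0 t s * ∑ a, ν s a * Aval γ P μ r s a := by
  have hVb : ∀ s, |Vval γ P μ r s| ≤ R / (1 - γ) :=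
    abs_Vval_le γ P μ r hγ0 hγ1 hP0 hP1 hμ0 hμ1 R hR
  have hgb : ∀ t, |∑ s, stateDist P ν d0 t s * Vval γ P μ r s| ≤ R / (1 - γ) := by
    intro t
    calc |∑ s, stateDist P ν d0 t s * Vval γ P μ r s|
        ≤ ∑ s, |stateDist P ν d0 t s * Vval γ P μ r s| := Finset.abs_sum_le_sum_abs _ _
      _ ≤ ∑ s, stateDist P ν d0 t s * (R / (1 - γ)) := by
          refine Finset.sum_le_sum fun s _ => ?_
          rw [abs_mul, abs_of_nonneg (stateDist_nonneg P ν d0 hP0 hν0 hd0 t s)]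
          exact mul_le_mul_of_nonneg_left (hVb s) (stateDist_nonneg P ν d0 hP0 hν0 hd0 t s)
      _ = R / (1 - γ) := by
          rw [← Finset.sum_mul, stateDist_sum_one P ν d0 hP1 hν1 hd1, one_mul]
  have hg : Summable (fun t => γ ^ t * ∑ s, stateDist P ν d0 t s * Vval γ P μ r s) := by
    refine summable_of_abs_bound γ (C := R / (1 - γ)) hγ0 hγ1 _ fun t => ?_
    rw [abs_mul, abs_pow, abs_of_nonneg hγ0, mul_comm]
    exact mul_le_mul_of_nonneg_right (hgb t) (pow_nonneg hγ0 t)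
  have hf : Summable (fun t => γ ^ t * expRew P ν r d0 t) :=
    summable_expRew γ P ν r d0 hγ0 hγ1 hP0 hP1 hν0 hν1 R hR hd0 hd1
  have hg' : Summable (fun t : ℕ =>
      γ ^ (t + 1) * ∑ s, stateDist P ν d0 (t + 1) s * Vval γ P μ r s) := by
    have h := hg.comp_injective Nat.succ_injective
    simpa [Function.comp_def] using h
  have hshift : ∑' t : ℕ, γ ^ (t + 1) * ∑ s, stateDist P ν d0 (t + 1) s * Vval γ P μ r s
      = (∑' t : ℕ, γ ^ t * ∑ s, stateDist P ν d0 t s * Vval γ P μ r s)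
        - ∑ s, d0 s * Vval γ P μ r s := by
    have h := Summable.tsum_eq_zero_add hg
    simp only [pow_zero, one_mul] at h
    have h0 : ∑ s, stateDist P ν d0 0 s * Vval γ P μ r s = ∑ s, d0 s * Vval γ P μ r s := rfl
    rw [h0] at h
    linarith
  have hterm : ∀ t : ℕ, γ ^ t * ∑ s, stateDist P ν d0 t s * ∑ a, ν s a * Aval γ P μ r s a
      = γ ^ t * expRew P ν r d0 t
        + γ ^ (t + 1) * ∑ s, stateDist P ν d0 (t + 1) s * Vval γ P μ r s
        - γ ^ t * ∑ s, stateDist P ν d0 t s * Vval γ P μ r s := by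
    intro t
    rw [step_identity γ P μ ν r d0 hγ0 hγ1 hP0 hP1 hμ0 hμ1 hν1 R hR t, pow_succ]
    ring
  symm
  calc ∑' t : ℕ, γ ^ t * ∑ s, stateDist P ν d0 t s * ∑ a, ν s a * Aval γ P μ r s a
      = ∑' t : ℕ, (γ ^ t * expRew P ν r d0 t
          + γ ^ (t + 1) * ∑ s, stateDist P ν d0 (t + 1) s * Vval γ P μ r s
          - γ ^ t * ∑ s, stateDist P ν d0 t s * Vval γ P μ r s) := tsum_congr hterm
    _ = (∑' t : ℕ, γ ^ t * expRew P ν r d0 t)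
        + (∑' t : ℕ, γ ^ (t + 1) * ∑ s, stateDist P ν d0 (t + 1) s * Vval γ P μ r s)
        - ∑' t : ℕ, γ ^ t * ∑ s, stateDist P ν d0 t s * Vval γ P μ r s := by
        rw [Summable.tsum_sub (hf.add hg') hg, Summable.tsum_add hf hg']
    _ = (∑' t : ℕ, γ ^ t * expRew P ν r d0 t) - ∑ s, d0 s * Vval γ P μ r s := by
        rw [hshift]; ring
    _ = (∑ s, d0 s * Vval γ P ν r s) - ∑ s, d0 s * Vval γ P μ r s := by
        rw [Vval_d0 γ P ν r d0 hγ0 hγ1 hP0 hP1 hν0 hν1 R hR hd0 hd1]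
end Aux6
section Aux7
variable {S A : Type*} [Fintype S] [Fintype A]
variable (P : S → A → S → ℝ) (μ ν : S → A → ℝ) (d0 : S → ℝ)

lemma coupling_bound (hP0 : ∀ s a s', 0 ≤ P s a s') (hP1 : ∀ s a, ∑ s', P s a s' = 1)
    (hμ0 : ∀ s a, 0 ≤ μ s a) (hμ1 : ∀ s, ∑ a, μ s a = 1)
    (hν0 : ∀ s a, 0 ≤ ν s a) (hν1 : ∀ s, ∑ a, ν s a = 1)
    (hd0 : ∀ s, 0 ≤ d0 s) (hd1 : ∑ s, d0 s = 1)
    (β : ℝ) (hβ : ∀ s, ∑ a, |ν s a - μ s a| ≤ β) :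
    ∀ t : ℕ, ∑ s, |stateDist P ν d0 t s - stateDist P μ d0 t s| ≤ t * β := by
  intro t
  induction t with
  | zero => simp [stateDist]
  | succ t ih =>
    have key : ∀ s', |stateDist P ν d0 (t + 1) s' - stateDist P μ d0 (t + 1) s'|
        ≤ ∑ s, ∑ a, (|stateDist P ν d0 t s - stateDist P μ d0 t s| * ν s a
            + stateDist P μ d0 t s * |ν s a - μ s a|) * P s a s' := by
      intro s'
      have e : stateDist P ν d0 (t + 1) s' - stateDist P μ d0 (t + 1) s'
          = ∑ s, ∑ a, ((stateDist P ν d0 t s - stateDist P μ d0 t s) * ν s a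
              + stateDist P μ d0 t s * (ν s a - μ s a)) * P s a s' := by
        show (∑ s, ∑ a, stateDist P ν d0 t s * ν s a * P s a s')
            - ∑ s, ∑ a, stateDist P μ d0 t s * μ s a * P s a s' = _
        rw [← Finset.sum_sub_distrib]
        refine Finset.sum_congr rfl fun s _ => ?_
        rw [← Finset.sum_sub_distrib]
        exact Finset.sum_congr rfl fun a _ => by ring
      rw [e]
      calc |∑ s, ∑ a, ((stateDist P ν d0 t s - stateDist P μ d0 t s) * ν s a
              + stateDist P μ d0 t s * (ν s a - μ s a)) * P s a s'|
          ≤ ∑ s, |∑ a, ((stateDist P ν d0 t s - stateDist P μ d0 t s) * ν s a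
              + stateDist P μ d0 t s * (ν s a - μ s a)) * P s a s'| :=
            Finset.abs_sum_le_sum_abs _ _
        _ ≤ ∑ s, ∑ a, |((stateDist P ν d0 t s - stateDist P μ d0 t s) * ν s a
              + stateDist P μ d0 t s * (ν s a - μ s a)) * P s a s'| :=
            Finset.sum_le_sum fun s _ => Finset.abs_sum_le_sum_abs _ _
        _ ≤ ∑ s, ∑ a, (|stateDist P ν d0 t s - stateDist P μ d0 t s| * ν s a
              + stateDist P μ d0 t s * |ν s a - μ s a|) * P s a s' := by
            refine Finset.sum_le_sum fun s _ => Finset.sum_le_sum fun a _ => ?_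
            rw [abs_mul, abs_of_nonneg (hP0 s a s')]
            refine mul_le_mul_of_nonneg_right ?_ (hP0 s a s')
            calc |(stateDist P ν d0 t s - stateDist P μ d0 t s) * ν s a
                  + stateDist P μ d0 t s * (ν s a - μ s a)|
                ≤ |(stateDist P ν d0 t s - stateDist P μ d0 t s) * ν s a|
                  + |stateDist P μ d0 t s * (ν s a - μ s a)| := abs_add_le _ _
              _ = |stateDist P ν d0 t s - stateDist P μ d0 t s| * ν s a
                  + stateDist P μ d0 t s * |ν s a - μ s a| := by
                  rw [abs_mul, abs_mul, abs_of_nonneg (hν0 s a),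
                    abs_of_nonneg (stateDist_nonneg P μ d0 hP0 hμ0 hd0 t s)]
    calc ∑ s', |stateDist P ν d0 (t + 1) s' - stateDist P μ d0 (t + 1) s'|
        ≤ ∑ s', ∑ s, ∑ a, (|stateDist P ν d0 t s - stateDist P μ d0 t s| * ν s a
            + stateDist P μ d0 t s * |ν s a - μ s a|) * P s a s' :=
          Finset.sum_le_sum fun s' _ => key s'
      _ = ∑ s, ∑ a, (|stateDist P ν d0 t s - stateDist P μ d0 t s| * ν s a
            + stateDist P μ d0 t s * |ν s a - μ s a|) := by
          rw [Finset.sum_comm]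
          refine Finset.sum_congr rfl fun s _ => ?_
          rw [Finset.sum_comm]
          refine Finset.sum_congr rfl fun a _ => ?_
          rw [← Finset.mul_sum, hP1, mul_one]
      _ = (∑ s, |stateDist P ν d0 t s - stateDist P μ d0 t s|)
            + ∑ s, stateDist P μ d0 t s * ∑ a, |ν s a - μ s a| := by
          rw [← Finset.sum_add_distrib]
          refine Finset.sum_congr rfl fun s _ => ?_
          rw [Finset.sum_add_distrib, ← Finset.mul_sum, ← Finset.mul_sum, hν1, mul_one]
      _ ≤ t * β + β := by
          refine add_le_add ih ?_
          calc ∑ s, stateDist P μ d0 t s * ∑ a, |ν s a - μ s a|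
              ≤ ∑ s, stateDist P μ d0 t s * β :=
                Finset.sum_le_sum fun s _ => mul_le_mul_of_nonneg_left (hβ s)
                  (stateDist_nonneg P μ d0 hP0 hμ0 hd0 t s)
            _ = β := by rw [← Finset.sum_mul, stateDist_sum_one P μ d0 hP1 hμ1 hd1, one_mul]
      _ = (t + 1 : ℕ) * β := by push_cast; ring
end Aux7

set_option maxHeartbeats 1000000 in
/-- TRPO surrogate bound for sums of individual advantages:
if `∑ᵢ |Aᵢ^{π_old}(s,a)| ≤ ε` for all `(s,a)`, then with
`L_{π_old}(π_new) = η(π_old) + E_{s∼d^{π_old}, a∼π_new(·|s)}[∑ᵢ Aᵢ^{π_old}(s,a)]` and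
`α = maxₛ D_TV(π_old(·|s), π_new(·|s))`, we have
`|η(π_new) − L_{π_old}(π_new)| ≤ 4εγα²/(1−γ)²`. -/
theorem trpo_surrogate_bound
    {S A ι : Type*} [Fintype S] [Fintype A] [Fintype ι] [DecidableEq S] [Nonempty S]
    (γ : ℝ) (hγ0 : 0 ≤ γ) (hγ1 : γ < 1)
    (P : S → A → S → ℝ) (hP0 : ∀ s a s', 0 ≤ P s a s') (hP1 : ∀ s a, ∑ s', P s a s' = 1)
    (πold πnew : S → A → ℝ)
    (hπo0 : ∀ s a, 0 ≤ πold s a) (hπo1 : ∀ s, ∑ a, πold s a = 1)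
    (hπn0 : ∀ s a, 0 ≤ πnew s a) (hπn1 : ∀ s, ∑ a, πnew s a = 1)
    (r : ι → S → A → ℝ)
    (d0 : S → ℝ) (hd0 : ∀ s, 0 ≤ d0 s) (hd1 : ∑ s, d0 s = 1)
    (ε : ℝ) (hε : ∀ s a, ∑ i, |Aval γ P πold (r i) s a| ≤ ε)
    (α : ℝ)
    (hα : α = Finset.univ.sup' Finset.univ_nonempty
      (fun s : S => (1 / 2) * ∑ a, |πold s a - πnew s a|)) :
    |eta γ P πnew r d0 -
        (eta γ P πold r d0 +
          ∑ s, dvisit γ P πold d0 s *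
            ∑ a, πnew s a * ∑ i, Aval γ P πold (r i) s a)| ≤
      4 * ε * γ * α ^ 2 / (1 - γ) ^ 2 := by
  haveI hA : Nonempty A := by
    by_contra h
    rw [not_nonempty_iff] at h
    have h1 := hπo1 (Classical.arbitrary S)
    rw [Finset.univ_eq_empty, Finset.sum_empty] at h1
    exact zero_ne_one h1
  -- per-agent reward bounds
  have hRf : ∀ i : ι, ∃ R : ℝ, ∀ s a, |r i s a| ≤ R := by
    intro i
    refine ⟨Finset.univ.sup' Finset.univ_nonempty (fun p : S × A => |r i p.1 p.2|),
      fun s a => ?_⟩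
    exact Finset.le_sup' (fun p : S × A => |r i p.1 p.2|) (Finset.mem_univ (s, a))
  choose Rf hR using hRf
  -- basic nonnegativity
  have hε0 : 0 ≤ ε := by
    refine le_trans ?_ (hε (Classical.arbitrary S) (Classical.arbitrary A))
    exact Finset.sum_nonneg fun i _ => abs_nonneg _
  have hα0 : 0 ≤ α := by
    rw [hα]
    refine le_trans ?_ (Finset.le_sup' _ (Finset.mem_univ (Classical.arbitrary S)))
    positivity
  have h2α : ∀ s, ∑ a, |πold s a - πnew s a| ≤ 2 * α := by
    intro s
    have h1 : (1 / 2 : ℝ) * ∑ a, |πold s a - πnew s a| ≤ α := by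
      rw [hα]
      exact Finset.le_sup' (fun s : S => (1 / 2) * ∑ a, |πold s a - πnew s a|)
        (Finset.mem_univ s)
    linarith
  have h2α' : ∀ s, ∑ a, |πnew s a - πold s a| ≤ 2 * α := by
    intro s
    have := h2α s
    simpa [abs_sub_comm] using this
  -- bound on summed advantage
  have hKb : ∀ s a, |∑ i, Aval γ P πold (r i) s a| ≤ ε :=
    fun s a => le_trans (Finset.abs_sum_le_sum_abs _ _) (hε s a)
  -- generic averaging bounds
  have habsC : ∀ (d : S → ℝ), (∀ s, 0 ≤ d s) → (∑ s, d s = 1) →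
      ∀ (w : S → ℝ) (C : ℝ), (∀ s, |w s| ≤ C) → |∑ s, d s * w s| ≤ C := by
    intro d h0 h1 w C hw
    calc |∑ s, d s * w s| ≤ ∑ s, |d s * w s| := Finset.abs_sum_le_sum_abs _ _
      _ ≤ ∑ s, d s * C := Finset.sum_le_sum fun s _ => by
          rw [abs_mul, abs_of_nonneg (h0 s)]
          exact mul_le_mul_of_nonneg_left (hw s) (h0 s)
      _ = C := by rw [← Finset.sum_mul, h1, one_mul]
  have habsCA : ∀ (s : S) (w : A → ℝ) (C : ℝ), (∀ a, |w a| ≤ C) →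
      |∑ a, πnew s a * w a| ≤ C := by
    intro s w C hw
    calc |∑ a, πnew s a * w a| ≤ ∑ a, |πnew s a * w a| := Finset.abs_sum_le_sum_abs _ _
      _ ≤ ∑ a, πnew s a * C := Finset.sum_le_sum fun a _ => by
          rw [abs_mul, abs_of_nonneg (hπn0 s a)]
          exact mul_le_mul_of_nonneg_left (hw a) (hπn0 s a)
      _ = C := by rw [← Finset.sum_mul, hπn1, one_mul]
  -- bound on g s := ∑ a, πnew s a * ∑ i, Aval γ P πold (r i) s a
  have hgb : ∀ s, |∑ a, πnew s a * ∑ i, Aval γ P πold (r i) s a| ≤ 2 * α * ε := by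
    intro s
    have hzero : ∑ a, πold s a * ∑ i, Aval γ P πold (r i) s a = 0 := by
      have h1 : ∀ a, πold s a * ∑ i, Aval γ P πold (r i) s a
          = ∑ i, πold s a * Aval γ P πold (r i) s a := fun a => Finset.mul_sum _ _ _
      rw [Finset.sum_congr rfl fun a _ => h1 a, Finset.sum_comm]
      exact Finset.sum_eq_zero fun i _ =>
        sum_pi_Aval_zero γ P πold (r i) hγ0 hγ1 hP0 hP1 hπo0 hπo1 (Rf i) (hR i) s
    have hg_eq : ∑ a, πnew s a * ∑ i, Aval γ P πold (r i) s a
        = ∑ a, (πnew s a - πold s a) * ∑ i, Aval γ P πold (r i) s a := by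
      rw [← sub_zero (∑ a, πnew s a * ∑ i, Aval γ P πold (r i) s a), ← hzero,
        ← Finset.sum_sub_distrib]
      exact Finset.sum_congr rfl fun a _ => by ring
    rw [hg_eq]
    calc |∑ a, (πnew s a - πold s a) * ∑ i, Aval γ P πold (r i) s a|
        ≤ ∑ a, |(πnew s a - πold s a) * ∑ i, Aval γ P πold (r i) s a| :=
          Finset.abs_sum_le_sum_abs _ _
      _ ≤ ∑ a, |πnew s a - πold s a| * ε := Finset.sum_le_sum fun a _ => by
          rw [abs_mul]
          exact mul_le_mul_of_nonneg_left (hKb s a) (abs_nonneg _)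
      _ = (∑ a, |πnew s a - πold s a|) * ε := (Finset.sum_mul _ _ _).symm
      _ ≤ 2 * α * ε := mul_le_mul_of_nonneg_right (h2α' s) hε0
  -- summabilities
  have hsumν : Summable (fun t => γ ^ t * ∑ s, stateDist P πnew d0 t s *
      ∑ a, πnew s a * ∑ i, Aval γ P πold (r i) s a) := by
    refine summable_of_abs_bound γ (C := 2 * α * ε) hγ0 hγ1 _ fun t => ?_
    rw [abs_mul, abs_pow, abs_of_nonneg hγ0, mul_comm]
    refine mul_le_mul_of_nonneg_right ?_ (pow_nonneg hγ0 t)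
    exact habsC _ (stateDist_nonneg P πnew d0 hP0 hπn0 hd0 t)
      (stateDist_sum_one P πnew d0 hP1 hπn1 hd1 t) _ _ hgb
  have hsumμ : Summable (fun t => γ ^ t * ∑ s, stateDist P πold d0 t s *
      ∑ a, πnew s a * ∑ i, Aval γ P πold (r i) s a) := by
    refine summable_of_abs_bound γ (C := 2 * α * ε) hγ0 hγ1 _ fun t => ?_
    rw [abs_mul, abs_pow, abs_of_nonneg hγ0, mul_comm]
    refine mul_le_mul_of_nonneg_right ?_ (pow_nonneg hγ0 t)
    exact habsC _ (stateDist_nonneg P πold d0 hP0 hπo0 hd0 t)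
      (stateDist_sum_one P πold d0 hP1 hπo1 hd1 t) _ _ hgb
  -- Step A : performance difference
  have hperf : eta γ P πnew r d0 - eta γ P πold r d0
      = ∑' t : ℕ, γ ^ t * ∑ s, stateDist P πnew d0 t s *
          ∑ a, πnew s a * ∑ i, Aval γ P πold (r i) s a := by
    have hYsum : ∀ i : ι, Summable (fun t => γ ^ t * ∑ s, stateDist P πnew d0 t s *
        ∑ a, πnew s a * Aval γ P πold (r i) s a) := by
      intro i
      have hRf0 : 0 ≤ Rf i :=
        le_trans (abs_nonneg _) (hR i (Classical.arbitrary S) (Classical.arbitrary A))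
      refine summable_of_abs_bound γ (C := 2 * Rf i / (1 - γ)) hγ0 hγ1 _ fun t => ?_
      rw [abs_mul, abs_pow, abs_of_nonneg hγ0, mul_comm]
      refine mul_le_mul_of_nonneg_right ?_ (pow_nonneg hγ0 t)
      refine habsC _ (stateDist_nonneg P πnew d0 hP0 hπn0 hd0 t)
        (stateDist_sum_one P πnew d0 hP1 hπn1 hd1 t) _ _ fun s => ?_
      exact habsCA s _ _ fun a =>
        abs_Aval_le γ P πold (r i) hγ0 hγ1 hP0 hP1 hπo0 hπo1 (Rf i) (hR i) s a
    rw [eta, eta, ← Finset.sum_sub_distrib]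
    rw [Finset.sum_congr rfl fun i _ => perf_diff γ P πold πnew (r i) d0 hγ0 hγ1
      hP0 hP1 hπo0 hπo1 hπn0 hπn1 (Rf i) (hR i) hd0 hd1]
    rw [← Summable.tsum_finsetSum fun i _ => hYsum i]
    refine tsum_congr fun t => ?_
    rw [← Finset.mul_sum]
    congr 1
    rw [Finset.sum_comm]
    refine Finset.sum_congr rfl fun s _ => ?_
    rw [← Finset.mul_sum]
    congr 1
    rw [Finset.sum_comm]
    exact Finset.sum_congr rfl fun a _ => (Finset.mul_sum _ _ _).symm
  -- Step B : surrogate term as a series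
  have hL : ∑ s, dvisit γ P πold d0 s * ∑ a, πnew s a * ∑ i, Aval γ P πold (r i) s a
      = ∑' t : ℕ, γ ^ t * ∑ s, stateDist P πold d0 t s *
          ∑ a, πnew s a * ∑ i, Aval γ P πold (r i) s a := by
    have hssum : ∀ s : S, Summable (fun t => γ ^ t * stateDist P πold d0 t s *
        ∑ a, πnew s a * ∑ i, Aval γ P πold (r i) s a) := by
      intro s
      refine summable_of_abs_bound γ
        (C := |∑ a, πnew s a * ∑ i, Aval γ P πold (r i) s a|) hγ0 hγ1 _ fun t => ?_
      have hsd0 := stateDist_nonneg P πold d0 hP0 hπo0 hd0 t s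
      have hsd1 : stateDist P πold d0 t s ≤ 1 := by
        rw [← stateDist_sum_one P πold d0 hP1 hπo1 hd1 t]
        exact Finset.single_le_sum
          (fun s' _ => stateDist_nonneg P πold d0 hP0 hπo0 hd0 t s') (Finset.mem_univ s)
      rw [abs_mul, abs_mul, abs_pow, abs_of_nonneg hγ0, abs_of_nonneg hsd0]
      calc γ ^ t * stateDist P πold d0 t s * |∑ a, πnew s a * ∑ i, Aval γ P πold (r i) s a|
          ≤ γ ^ t * 1 * |∑ a, πnew s a * ∑ i, Aval γ P πold (r i) s a| := by
            refine mul_le_mul_of_nonneg_right ?_ (abs_nonneg _)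
            exact mul_le_mul_of_nonneg_left hsd1 (pow_nonneg hγ0 t)
        _ = |∑ a, πnew s a * ∑ i, Aval γ P πold (r i) s a| * γ ^ t := by ring
    have h1 : ∀ s, dvisit γ P πold d0 s * ∑ a, πnew s a * ∑ i, Aval γ P πold (r i) s a
        = ∑' t : ℕ, γ ^ t * stateDist P πold d0 t s *
            ∑ a, πnew s a * ∑ i, Aval γ P πold (r i) s a := by
      intro s
      rw [dvisit, ← tsum_mul_right]
    rw [Finset.sum_congr rfl fun s _ => h1 s, ← Summable.tsum_finsetSum fun s _ => hssum s]
    refine tsum_congr fun t => ?_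
    rw [Finset.mul_sum]
    exact Finset.sum_congr rfl fun s _ => by ring
  -- combine
  have hmain : eta γ P πnew r d0 -
      (eta γ P πold r d0 + ∑ s, dvisit γ P πold d0 s *
        ∑ a, πnew s a * ∑ i, Aval γ P πold (r i) s a)
      = ∑' t : ℕ, (γ ^ t * (∑ s, stateDist P πnew d0 t s *
            ∑ a, πnew s a * ∑ i, Aval γ P πold (r i) s a)
          - γ ^ t * ∑ s, stateDist P πold d0 t s *
            ∑ a, πnew s a * ∑ i, Aval γ P πold (r i) s a) := by
    rw [Summable.tsum_sub hsumν hsumμ, ← hperf, ← hL]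
    ring
  rw [hmain]
  -- final estimate
  have hnorm : ‖γ‖ < 1 := by rw [Real.norm_eq_abs, abs_of_nonneg hγ0]; exact hγ1
  have hSnm : HasSum (fun n : ℕ => (n : ℝ) * γ ^ n) (γ / (1 - γ) ^ 2) :=
    hasSum_coe_mul_geometric_of_norm_lt_one hnorm
  have hbound : ∀ t : ℕ, |γ ^ t * (∑ s, stateDist P πnew d0 t s *
        ∑ a, πnew s a * ∑ i, Aval γ P πold (r i) s a)
      - γ ^ t * ∑ s, stateDist P πold d0 t s *
        ∑ a, πnew s a * ∑ i, Aval γ P πold (r i) s a|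
      ≤ 4 * ε * α ^ 2 * ((t : ℝ) * γ ^ t) := by
    intro t
    have hdiff : γ ^ t * (∑ s, stateDist P πnew d0 t s *
          ∑ a, πnew s a * ∑ i, Aval γ P πold (r i) s a)
        - γ ^ t * ∑ s, stateDist P πold d0 t s *
          ∑ a, πnew s a * ∑ i, Aval γ P πold (r i) s a
        = γ ^ t * ∑ s, (stateDist P πnew d0 t s - stateDist P πold d0 t s) *
            ∑ a, πnew s a * ∑ i, Aval γ P πold (r i) s a := by
      rw [← mul_sub, ← Finset.sum_sub_distrib]
      congr 1
      exact Finset.sum_congr rfl fun s _ => by ring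
    rw [hdiff, abs_mul, abs_pow, abs_of_nonneg hγ0]
    have h2 : |∑ s, (stateDist P πnew d0 t s - stateDist P πold d0 t s) *
          ∑ a, πnew s a * ∑ i, Aval γ P πold (r i) s a|
        ≤ ((t : ℝ) * (2 * α)) * (2 * α * ε) := by
      calc |∑ s, (stateDist P πnew d0 t s - stateDist P πold d0 t s) *
            ∑ a, πnew s a * ∑ i, Aval γ P πold (r i) s a|
          ≤ ∑ s, |(stateDist P πnew d0 t s - stateDist P πold d0 t s) *
            ∑ a, πnew s a * ∑ i, Aval γ P πold (r i) s a| := Finset.abs_sum_le_sum_abs _ _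
        _ ≤ ∑ s, |stateDist P πnew d0 t s - stateDist P πold d0 t s| * (2 * α * ε) :=
            Finset.sum_le_sum fun s _ => by
              rw [abs_mul]
              exact mul_le_mul_of_nonneg_left (hgb s) (abs_nonneg _)
        _ = (∑ s, |stateDist P πnew d0 t s - stateDist P πold d0 t s|) * (2 * α * ε) :=
            (Finset.sum_mul _ _ _).symm
        _ ≤ ((t : ℝ) * (2 * α)) * (2 * α * ε) := by
            refine mul_le_mul_of_nonneg_right ?_ (by positivity)
            exact coupling_bound P πold πnew d0 hP0 hP1 hπo0 hπo1 hπn0 hπn1 hd0 hd1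
              (2 * α) h2α' t
    calc γ ^ t * |∑ s, (stateDist P πnew d0 t s - stateDist P πold d0 t s) *
          ∑ a, πnew s a * ∑ i, Aval γ P πold (r i) s a|
        ≤ γ ^ t * (((t : ℝ) * (2 * α)) * (2 * α * ε)) :=
          mul_le_mul_of_nonneg_left h2 (pow_nonneg hγ0 t)
      _ = 4 * ε * α ^ 2 * ((t : ℝ) * γ ^ t) := by ring
  have hsub : Summable (fun t : ℕ => γ ^ t * (∑ s, stateDist P πnew d0 t s *
        ∑ a, πnew s a * ∑ i, Aval γ P πold (r i) s a)
      - γ ^ t * ∑ s, stateDist P πold d0 t s *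
        ∑ a, πnew s a * ∑ i, Aval γ P πold (r i) s a) := hsumν.sub hsumμ
  have hsb : Summable (fun t : ℕ => 4 * ε * α ^ 2 * ((t : ℝ) * γ ^ t)) :=
    hSnm.summable.mul_left _
  have habs : |∑' t : ℕ, (γ ^ t * (∑ s, stateDist P πnew d0 t s *
        ∑ a, πnew s a * ∑ i, Aval γ P πold (r i) s a)
      - γ ^ t * ∑ s, stateDist P πold d0 t s *
        ∑ a, πnew s a * ∑ i, Aval γ P πold (r i) s a)|
      ≤ ∑' t : ℕ, |γ ^ t * (∑ s, stateDist P πnew d0 t s *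
        ∑ a, πnew s a * ∑ i, Aval γ P πold (r i) s a)
      - γ ^ t * ∑ s, stateDist P πold d0 t s *
        ∑ a, πnew s a * ∑ i, Aval γ P πold (r i) s a| := by
    simpa only [Real.norm_eq_abs] using
      norm_tsum_le_tsum_norm (f := fun t : ℕ => γ ^ t * (∑ s, stateDist P πnew d0 t s *
          ∑ a, πnew s a * ∑ i, Aval γ P πold (r i) s a)
        - γ ^ t * ∑ s, stateDist P πold d0 t s *
          ∑ a, πnew s a * ∑ i, Aval γ P πold (r i) s a)
        (by simpa only [Real.norm_eq_abs] using hsub.abs)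
  calc |∑' t : ℕ, (γ ^ t * (∑ s, stateDist P πnew d0 t s *
        ∑ a, πnew s a * ∑ i, Aval γ P πold (r i) s a)
      - γ ^ t * ∑ s, stateDist P πold d0 t s *
        ∑ a, πnew s a * ∑ i, Aval γ P πold (r i) s a)|
      ≤ ∑' t : ℕ, |γ ^ t * (∑ s, stateDist P πnew d0 t s *
        ∑ a, πnew s a * ∑ i, Aval γ P πold (r i) s a)
      - γ ^ t * ∑ s, stateDist P πold d0 t s *
        ∑ a, πnew s a * ∑ i, Aval γ P πold (r i) s a| := habs
    _ ≤ ∑' t : ℕ, 4 * ε * α ^ 2 * ((t : ℝ) * γ ^ t) :=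
        Summable.tsum_le_tsum hbound hsub.abs hsb
    _ = 4 * ε * α ^ 2 * (γ / (1 - γ) ^ 2) := by rw [tsum_mul_left, hSnm.tsum_eq]
    _ = 4 * ε * γ * α ^ 2 / (1 - γ) ^ 2 := by ring
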